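/- Suppose a two-agent allocation (A_1, A_2) of [0,1] into disjoint measurable sets must satisfy all three of: (i) |A_2 ∩ X_2| ≤ 1/4 + ε/4; (ii) v_1(A_1) ≥ 1/4 + ε/4 where v_1 has density 1 on X_{11}, ε on X_{12}, 2ε on X_{21}, ε on X_{22}; (iii) v_2(A_2) ≥ 3/8 where v_2 has density 1−ε on X_{11}, ε on X_{12}, 1 on X_2. Then for all sufficiently small ε > 0 no such allocation exists. -/

import Mathlib

open MeasureTheory Set
open scoped Classical

/-- The value of set `X` under value density function `f`. -/
noncomputable def val (f : ℝ → ℝ) (X : Set ℝ) : ℝ := ∫ t in X, f t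

/-- For sufficiently small `ε > 0`, no pair of disjoint measurable sets `A₁, A₂ ⊆ [0,1]`
simultaneously satisfies (i) `|A₂ ∩ X₂| ≤ 1/4 + ε/4`, (ii) `v₁(A₁) ≥ 1/4 + ε/4` and
(iii) `v₂(A₂) ≥ 3/8`, where `v₁` has density `1, ε, 2ε, ε` on `X₁₁, X₁₂, X₂₁, X₂₂`
and `v₂` has density `1−ε, ε, 1` on `X₁₁, X₁₂, X₂`. -/
theorem no_allocation_for_instance_six
    (X₁₁ X₁₂ X₂₁ X₂₂ : Set ℝ)
    (hm₁₁ : MeasurableSet X₁₁) (hm₁₂ : MeasurableSet X₁₂)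
    (hm₂₁ : MeasurableSet X₂₁) (hm₂₂ : MeasurableSet X₂₂)
    (hsub : X₁₁ ⊆ Set.Icc 0 1 ∧ X₁₂ ⊆ Set.Icc 0 1 ∧ X₂₁ ⊆ Set.Icc 0 1 ∧ X₂₂ ⊆ Set.Icc 0 1)
    (hd₁ : Disjoint X₁₁ X₁₂) (hd₂ : Disjoint X₁₁ X₂₁) (hd₃ : Disjoint X₁₁ X₂₂)
    (hd₄ : Disjoint X₁₂ X₂₁) (hd₅ : Disjoint X₁₂ X₂₂) (hd₆ : Disjoint X₂₁ X₂₂)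
    (hv₁₁ : volume X₁₁ = 1/4) (hv₁₂ : volume X₁₂ = 1/4)
    (hv₂₁ : volume X₂₁ = 1/4) (hv₂₂ : volume X₂₂ = 1/4) :
    ∃ ε₀ > (0:ℝ), ∀ ε : ℝ, 0 < ε → ε < ε₀ →
      ¬ ∃ A₁ A₂ : Set ℝ,
        MeasurableSet A₁ ∧ MeasurableSet A₂ ∧ Disjoint A₁ A₂ ∧
        A₁ ⊆ Set.Icc 0 1 ∧ A₂ ⊆ Set.Icc 0 1 ∧
        -- (i)
        volume (A₂ ∩ (X₂₁ ∪ X₂₂)) ≤ ENNReal.ofReal (1/4 + ε/4) ∧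
        -- (ii)
        val (fun t => if t ∈ X₁₁ then 1 else if t ∈ X₁₂ then ε else if t ∈ X₂₁ then 2*ε else ε) A₁
          ≥ 1/4 + ε/4 ∧
        -- (iii)
        val (fun t => if t ∈ X₁₁ then 1 - ε else if t ∈ X₁₂ then ε else 1) A₂ ≥ 3/8 := by
  classical
  obtain ⟨hs₁₁, hs₁₂, hs₂₁, hs₂₂⟩ := hsub
  refine ⟨1/100, by norm_num, ?_⟩
  rintro ε hε hε' ⟨A₁, A₂, hA₁m, hA₂m, hAd, hA₁s, hA₂s, hi, hii, hiii⟩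
  set f₁ : ℝ → ℝ := fun t => if t ∈ X₁₁ then 1 else if t ∈ X₁₂ then ε
      else if t ∈ X₂₁ then 2*ε else ε with hf₁
  set f₂ : ℝ → ℝ := fun t => if t ∈ X₁₁ then 1 - ε else if t ∈ X₁₂ then ε else 1 with hf₂
  have hf₁m : Measurable f₁ := by
    refine Measurable.ite hm₁₁ measurable_const ?_
    exact Measurable.ite hm₁₂ measurable_const
      (Measurable.ite hm₂₁ measurable_const measurable_const)
  have hf₂m : Measurable f₂ := by
    exact Measurable.ite hm₁₁ measurable_const
      (Measurable.ite hm₁₂ measurable_const measurable_const)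
  have hfin : ∀ s : Set ℝ, s ⊆ Set.Icc 0 1 → volume s ≠ ⊤ := fun s hs =>
    ((measure_mono hs).trans_lt measure_Icc_lt_top).ne
  have hle1 : ∀ s : Set ℝ, s ⊆ Set.Icc 0 1 → (volume s).toReal ≤ 1 := by
    intro s hs
    have h : volume s ≤ volume (Set.Icc (0:ℝ) 1) := measure_mono hs
    rw [Real.volume_Icc] at h
    have := ENNReal.toReal_mono (by norm_num) h
    simpa using this
  have hint₁ : ∀ s : Set ℝ, s ⊆ Set.Icc 0 1 → IntegrableOn f₁ s volume := by
    intro s hs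
    refine Measure.integrableOn_of_bounded (M := 2) (hfin s hs) hf₁m.aestronglyMeasurable ?_
    refine ae_of_all _ fun t => ?_
    simp only [hf₁, Real.norm_eq_abs]
    split_ifs <;> rw [abs_le] <;> constructor <;> linarith
  have hint₂ : ∀ s : Set ℝ, s ⊆ Set.Icc 0 1 → IntegrableOn f₂ s volume := by
    intro s hs
    refine Measure.integrableOn_of_bounded (M := 2) (hfin s hs) hf₂m.aestronglyMeasurable ?_
    refine ae_of_all _ fun t => ?_
    simp only [hf₂, Real.norm_eq_abs]
    split_ifs <;> rw [abs_le] <;> constructor <;> linarith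
  -- the four pieces cover [0,1] up to null sets
  set U : Set ℝ := X₁₁ ∪ X₁₂ ∪ X₂₁ ∪ X₂₂ with hU
  have hUm : MeasurableSet U := ((hm₁₁.union hm₁₂).union hm₂₁).union hm₂₂
  have hUsub : U ⊆ Set.Icc 0 1 := by
    intro t ht
    rcases ht with ((h | h) | h) | h
    · exact hs₁₁ h
    · exact hs₁₂ h
    · exact hs₂₁ h
    · exact hs₂₂ h
  have hUvol : volume U = 1 := by
    rw [hU, measure_union ((hd₃.union_left hd₅).union_left hd₆) hm₂₂,
      measure_union (hd₂.union_left hd₄) hm₂₁, measure_union hd₁ hm₁₂,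
      hv₁₁, hv₁₂, hv₂₁, hv₂₂, ENNReal.div_add_div_same, ENNReal.div_add_div_same,
      ENNReal.div_add_div_same]
    rw [show (1+1+1+1 : ENNReal) = 4 by norm_num,
      ENNReal.div_self (by norm_num) (by norm_num)]
  have hN : volume (Set.Icc (0:ℝ) 1 \ U) = 0 := by
    have h := measure_diff hUsub hUm.nullMeasurableSet (by rw [hUvol]; exact ENNReal.one_ne_top)
    rw [hUvol, Real.volume_Icc] at h
    simpa using h
  -- real-valued measures
  set a : ℝ := (volume (A₂ ∩ X₁₁)).toReal with ha
  set b : ℝ := (volume (A₂ ∩ X₁₂)).toReal with hb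
  set r : ℝ := (volume (A₂ \ (X₁₁ ∪ X₁₂))).toReal with hr
  set a₁ : ℝ := (volume (A₁ ∩ X₁₁)).toReal with ha₁
  have ha0 : 0 ≤ a := ENNReal.toReal_nonneg
  have ha₁0 : 0 ≤ a₁ := ENNReal.toReal_nonneg
  have hb0 : 0 ≤ b := ENNReal.toReal_nonneg
  have hr0 : 0 ≤ r := ENNReal.toReal_nonneg
  have hb14 : b ≤ 1/4 := by
    have h : volume (A₂ ∩ X₁₂) ≤ 1/4 := hv₁₂ ▸ measure_mono inter_subset_right
    have := ENNReal.toReal_mono (by norm_num) h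
    rw [hb]
    refine this.trans ?_
    norm_num
  have hr14 : r ≤ 1/4 + ε/4 := by
    have hsub' : A₂ \ (X₁₁ ∪ X₁₂) ⊆ (A₂ ∩ (X₂₁ ∪ X₂₂)) ∪ (Set.Icc (0:ℝ) 1 \ U) := by
      rintro t ⟨ht, hn⟩
      by_cases h2 : t ∈ X₂₁ ∪ X₂₂
      · exact Or.inl ⟨ht, h2⟩
      · refine Or.inr ⟨hA₂s ht, ?_⟩
        rintro (((h | h) | h) | h)
        · exact hn (Or.inl h)
        · exact hn (Or.inr h)
        · exact h2 (Or.inl h)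
        · exact h2 (Or.inr h)
    have h : volume (A₂ \ (X₁₁ ∪ X₁₂)) ≤ ENNReal.ofReal (1/4 + ε/4) := by
      calc volume (A₂ \ (X₁₁ ∪ X₁₂)) ≤ volume ((A₂ ∩ (X₂₁ ∪ X₂₂)) ∪ (Set.Icc (0:ℝ) 1 \ U)) :=
            measure_mono hsub'
        _ ≤ volume (A₂ ∩ (X₂₁ ∪ X₂₂)) + volume (Set.Icc (0:ℝ) 1 \ U) := measure_union_le _ _
        _ = volume (A₂ ∩ (X₂₁ ∪ X₂₂)) := by rw [hN, add_zero]
        _ ≤ ENNReal.ofReal (1/4 + ε/4) := hi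
    have := ENNReal.toReal_mono ENNReal.ofReal_ne_top h
    rw [ENNReal.toReal_ofReal (by linarith)] at this
    exact this
  have haa₁ : a₁ + a ≤ 1/4 := by
    have hdis : Disjoint (A₁ ∩ X₁₁) (A₂ ∩ X₁₁) :=
      hAd.mono inter_subset_left inter_subset_left
    have h : volume (A₁ ∩ X₁₁) + volume (A₂ ∩ X₁₁) ≤ 1/4 := by
      rw [← measure_union hdis (hA₂m.inter hm₁₁)]
      exact hv₁₁ ▸ measure_mono (union_subset inter_subset_right inter_subset_right)
    have hfin1 : volume (A₁ ∩ X₁₁) ≠ ⊤ := hfin _ fun t ht => hA₁s ht.1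
    have hfin2 : volume (A₂ ∩ X₁₁) ≠ ⊤ := hfin _ fun t ht => hA₂s ht.1
    have := ENNReal.toReal_mono (by norm_num) h
    rw [ENNReal.toReal_add hfin1 hfin2] at this
    refine this.trans ?_
    norm_num
  -- compute v₂(A₂)
  have hA₂eq : A₂ = (A₂ ∩ X₁₁) ∪ ((A₂ ∩ X₁₂) ∪ (A₂ \ (X₁₁ ∪ X₁₂))) := by
    ext t
    simp only [mem_union, mem_inter_iff, mem_diff]
    tauto
  have hdisj1 : Disjoint (A₂ ∩ X₁₁) ((A₂ ∩ X₁₂) ∪ (A₂ \ (X₁₁ ∪ X₁₂))) := by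
    rw [Set.disjoint_left]
    rintro t ⟨_, h11⟩ (⟨_, h12⟩ | ⟨_, hn⟩)
    · exact (Set.disjoint_left.mp hd₁) h11 h12
    · exact hn (Or.inl h11)
  have hdisj2 : Disjoint (A₂ ∩ X₁₂) (A₂ \ (X₁₁ ∪ X₁₂)) := by
    rw [Set.disjoint_left]
    rintro t ⟨_, h12⟩ ⟨_, hn⟩
    exact hn (Or.inr h12)
  have hsub1 : A₂ ∩ X₁₁ ⊆ Set.Icc (0:ℝ) 1 := fun t ht => hA₂s ht.1
  have hsub2 : A₂ ∩ X₁₂ ⊆ Set.Icc (0:ℝ) 1 := fun t ht => hA₂s ht.1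
  have hsub3 : A₂ \ (X₁₁ ∪ X₁₂) ⊆ Set.Icc (0:ℝ) 1 := fun t ht => hA₂s ht.1
  have hsub23 : (A₂ ∩ X₁₂) ∪ (A₂ \ (X₁₁ ∪ X₁₂)) ⊆ Set.Icc (0:ℝ) 1 :=
    union_subset hsub2 hsub3
  have hval₂ : val f₂ A₂ = (1 - ε) * a + (ε * b + 1 * r) := by
    rw [val, hA₂eq,
      setIntegral_union hdisj1 ((hA₂m.inter hm₁₂).union (hA₂m.diff (hm₁₁.union hm₁₂)))
        (hint₂ _ hsub1) (hint₂ _ hsub23),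
      setIntegral_union hdisj2 (hA₂m.diff (hm₁₁.union hm₁₂)) (hint₂ _ hsub2) (hint₂ _ hsub3)]
    have e1 : ∫ t in A₂ ∩ X₁₁, f₂ t = (1 - ε) * a := by
      rw [setIntegral_congr_fun (hA₂m.inter hm₁₁) (g := fun _ => 1 - ε)
        (fun t ht => by simp [hf₂, ht.2]), setIntegral_const, smul_eq_mul, mul_comm, measureReal_def]
    have e2 : ∫ t in A₂ ∩ X₁₂, f₂ t = ε * b := by
      rw [setIntegral_congr_fun (hA₂m.inter hm₁₂) (g := fun _ => ε)
        (fun t ht => by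
          have h11 : t ∉ X₁₁ := fun h => (Set.disjoint_left.mp hd₁) h ht.2
          simp [hf₂, h11, ht.2]), setIntegral_const, smul_eq_mul, mul_comm, measureReal_def]
    have e3 : ∫ t in A₂ \ (X₁₁ ∪ X₁₂), f₂ t = 1 * r := by
      rw [setIntegral_congr_fun (hA₂m.diff (hm₁₁.union hm₁₂)) (g := fun _ => 1)
        (fun t ht => by
          have h11 : t ∉ X₁₁ := fun h => ht.2 (Or.inl h)
          have h12 : t ∉ X₁₂ := fun h => ht.2 (Or.inr h)
          simp [hf₂, h11, h12]), setIntegral_const, smul_eq_mul, mul_comm, measureReal_def]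
    rw [e1, e2, e3]
  -- bound v₁(A₁)
  have hA₁eq : A₁ = (A₁ ∩ X₁₁) ∪ (A₁ \ X₁₁) := (Set.inter_union_diff A₁ X₁₁).symm
  have hsubT1 : A₁ ∩ X₁₁ ⊆ Set.Icc (0:ℝ) 1 := fun t ht => hA₁s ht.1
  have hsubT2 : A₁ \ X₁₁ ⊆ Set.Icc (0:ℝ) 1 := fun t ht => hA₁s ht.1
  have hval₁ : val f₁ A₁ ≤ a₁ + 2 * ε := by
    rw [val, hA₁eq,
      setIntegral_union (disjoint_sdiff_right.mono_left inter_subset_right) (hA₁m.diff hm₁₁)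
        (hint₁ _ hsubT1) (hint₁ _ hsubT2)]
    have e1 : ∫ t in A₁ ∩ X₁₁, f₁ t = a₁ := by
      rw [setIntegral_congr_fun (hA₁m.inter hm₁₁) (g := fun _ => 1)
        (fun t ht => by simp [hf₁, ht.2]), setIntegral_const, smul_eq_mul, mul_one, measureReal_def]
    have e2 : ∫ t in A₁ \ X₁₁, f₁ t ≤ 2 * ε := by
      calc ∫ t in A₁ \ X₁₁, f₁ t ≤ ∫ _ in A₁ \ X₁₁, 2 * ε := by
            refine setIntegral_mono_on (hint₁ _ hsubT2)
              (integrableOn_const (hfin _ hsubT2))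
              (hA₁m.diff hm₁₁) fun t ht => ?_
            simp only [hf₁]
            rw [if_neg ht.2]
            split_ifs <;> linarith
        _ = (volume (A₁ \ X₁₁)).toReal * (2 * ε) := by rw [setIntegral_const, smul_eq_mul, measureReal_def]
        _ ≤ 1 * (2 * ε) := by
            have := hle1 _ hsubT2
            nlinarith
        _ = 2 * ε := one_mul _
    rw [e1]
    linarith
  -- combine
  have h1 : 1/4 + ε/4 ≤ a₁ + 2 * ε := le_trans hii hval₁
  have h2 : 3/8 ≤ (1 - ε) * a + (ε * b + 1 * r) := hval₂ ▸ hiii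
  have hεb : ε * b ≤ ε / 4 := by nlinarith
  have h3 : 1/8 - ε/2 ≤ (1 - ε) * a := by linarith
  have h4 : (1 - ε) * a ≤ a := by nlinarith
  -- a ≤ 7ε/4 from h1 and haa₁; a ≥ 1/8 - ε/2; contradiction for ε < 1/100
  linarith
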